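/- arXiv:2405.10184 — 2 statements merged into one kernel-verified Lean document; each statement's English description precedes it below -/
import Mathlib

section
/- For the 1D chromatin model: the birth–death chain on {0,…,D} (D ≥ 2) with rates λ_x^ε = (c x + ε c D)(D − x) and γ_x^ε = μ(c(D − x) + b ε c D) x (with constants c, μ, b > 0 and ε > 0), the stationary distribution π(ε) satisfies lim_{ε→0} π₀(ε) = b μ^D / (1 + b μ^D), lim_{ε→0} π_D(ε) = 1/(1 + b μ^D), and lim_{ε→0} π_x(ε) = 0 for all 0 < x < D. -/
open Matrix Filter Topology

/-- The generator of the 1D chromatin model: a birth–death chain on `{0,…,D}` with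
birth rates `λ_x^ε = (c x + ε c D)(D − x)` and death rates
`γ_x^ε = μ (c (D − x) + b ε c D) x`. -/
noncomputable def chromGen (D : ℕ) (c μ b ε : ℝ) :
    Matrix (Fin (D + 1)) (Fin (D + 1)) ℝ :=
  Matrix.of fun x y =>
    if (y : ℕ) = (x : ℕ) + 1 then (c * (x : ℕ) + ε * c * D) * ((D : ℝ) - (x : ℕ))
    else if (y : ℕ) + 1 = (x : ℕ) then μ * (c * ((D : ℝ) - (x : ℕ)) + b * ε * c * D) * (x : ℕ)
    else if x = y then
      -((c * (x : ℕ) + ε * c * D) * ((D : ℝ) - (x : ℕ))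
        + μ * (c * ((D : ℝ) - (x : ℕ)) + b * ε * c * D) * (x : ℕ))
    else 0

section ChromAux
open Finset

noncomputable def lamF (D : ℕ) (c ε : ℝ) (i : ℕ) : ℝ :=
  (c * i + ε * c * D) * ((D : ℝ) - i)

noncomputable def gamF (D : ℕ) (c μ b ε : ℝ) (i : ℕ) : ℝ :=
  μ * (c * ((D : ℝ) - i) + b * ε * c * D) * i

noncomputable def rhoF (D : ℕ) (c μ b ε : ℝ) (x : ℕ) : ℝ :=
  ∏ i ∈ Finset.range x, lamF D c ε i / gamF D c μ b ε (i + 1)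

lemma gen_add (D : ℕ) (c μ b ε : ℝ) (k : ℕ) (hk : k < D) :
    chromGen D c μ b ε ⟨k, by omega⟩ ⟨k + 1, by omega⟩ = lamF D c ε k := by
  simp only [chromGen, Matrix.of_apply, lamF, Fin.mk.injEq]
  split_ifs with h1 h2 h3 <;> first | rfl | (exfalso; omega) | (push_cast; ring) | simp_all

lemma gen_sub (D : ℕ) (c μ b ε : ℝ) (k : ℕ) (hk : k < D) :
    chromGen D c μ b ε ⟨k + 1, by omega⟩ ⟨k, by omega⟩ = gamF D c μ b ε (k + 1) := by
  simp only [chromGen, Matrix.of_apply, gamF, Fin.mk.injEq]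
  split_ifs with h1 h2 h3 <;> first | rfl | (exfalso; omega) | (push_cast; ring) | simp_all

lemma gen_diag (D : ℕ) (c μ b ε : ℝ) (k : ℕ) (hk : k ≤ D) :
    chromGen D c μ b ε ⟨k, by omega⟩ ⟨k, by omega⟩
      = -(lamF D c ε k + gamF D c μ b ε k) := by
  simp only [chromGen, Matrix.of_apply, lamF, gamF, Fin.mk.injEq]
  split_ifs with h1 h2 h3 <;> first | rfl | (exfalso; omega) | (push_cast; ring) | simp_all

lemma gen_other (D : ℕ) (c μ b ε : ℝ) (x y : Fin (D + 1))
    (h1 : (y : ℕ) ≠ (x : ℕ) + 1) (h2 : (y : ℕ) + 1 ≠ (x : ℕ)) (h3 : (x : ℕ) ≠ (y : ℕ)) :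
    chromGen D c μ b ε x y = 0 := by
  simp only [chromGen, Matrix.of_apply]
  rw [if_neg h1, if_neg h2, if_neg (fun h => h3 (congrArg Fin.val h))]

lemma sum_two (D : ℕ) (c μ b ε : ℝ) (hD : 1 ≤ D) (v : Fin (D + 1) → ℝ) :
    ∑ x : Fin (D + 1), v x * chromGen D c μ b ε x ⟨0, by omega⟩
      = v ⟨0, by omega⟩ * chromGen D c μ b ε ⟨0, by omega⟩ ⟨0, by omega⟩
      + v ⟨1, by omega⟩ * chromGen D c μ b ε ⟨1, by omega⟩ ⟨0, by omega⟩ := by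
  rw [← Finset.sum_subset
      (Finset.subset_univ ({⟨0, by omega⟩, ⟨1, by omega⟩} : Finset (Fin (D + 1))))
      (fun x _ hx => ?_)]
  · rw [Finset.sum_pair (by simp [Fin.ext_iff])]
  · simp only [Finset.mem_insert, Finset.mem_singleton, Fin.ext_iff] at hx
    push_neg at hx
    rw [gen_other D c μ b ε x _ (by show (0:ℕ) ≠ _; omega) (by show (0:ℕ)+1 ≠ _; omega)
      (by show _ ≠ (0:ℕ); omega), mul_zero]

lemma sum_three (D : ℕ) (c μ b ε : ℝ) (k : ℕ) (h0 : 0 < k) (hk : k < D) (v : Fin (D + 1) → ℝ) :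
    ∑ x : Fin (D + 1), v x * chromGen D c μ b ε x ⟨k, by omega⟩
      = v ⟨k - 1, by omega⟩ * chromGen D c μ b ε ⟨k - 1, by omega⟩ ⟨k, by omega⟩
      + v ⟨k, by omega⟩ * chromGen D c μ b ε ⟨k, by omega⟩ ⟨k, by omega⟩
      + v ⟨k + 1, by omega⟩ * chromGen D c μ b ε ⟨k + 1, by omega⟩ ⟨k, by omega⟩ := by
  rw [← Finset.sum_subset
      (Finset.subset_univ ({⟨k - 1, by omega⟩, ⟨k, by omega⟩, ⟨k + 1, by omega⟩} :
        Finset (Fin (D + 1)))) (fun x _ hx => ?_)]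
  · rw [Finset.sum_insert (by simp [Fin.ext_iff]; omega),
      Finset.sum_pair (by simp [Fin.ext_iff]), add_assoc]
  · simp only [Finset.mem_insert, Finset.mem_singleton, Fin.ext_iff] at hx
    push_neg at hx
    obtain ⟨a1, a2, a3⟩ := hx
    rw [gen_other D c μ b ε x _ (by simp; omega) (by simp; omega) (by simp; omega), mul_zero]

lemma gam_zero (D : ℕ) (c μ b ε : ℝ) : gamF D c μ b ε 0 = 0 := by simp [gamF]

lemma balance (D : ℕ) (c μ b ε : ℝ) (hD : 2 ≤ D) (v : Fin (D + 1) → ℝ)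
    (hv : ∀ y : Fin (D + 1), ∑ x : Fin (D + 1), v x * chromGen D c μ b ε x y = 0) :
    ∀ k (hk2 : k < D), v ⟨k, by omega⟩ * lamF D c ε k
      = v ⟨k + 1, by omega⟩ * gamF D c μ b ε (k + 1) := by
  intro k
  induction k with
  | zero =>
    intro hk
    have h0 := hv ⟨0, by omega⟩
    rw [sum_two D c μ b ε (by omega) v, gen_diag D c μ b ε 0 (by omega),
      show (⟨0 + 1, by omega⟩ : Fin (D + 1)) = ⟨1, by omega⟩ from rfl,
      gen_sub D c μ b ε 0 (by omega), gam_zero] at h0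
    linear_combination -h0
  | succ k ih =>
    intro hk
    have hb := ih (by omega)
    have h1 := hv ⟨k + 1, by omega⟩
    rw [sum_three D c μ b ε (k + 1) (by omega) (by omega) v] at h1
    rw [show (⟨k + 1 - 1, by omega⟩ : Fin (D + 1)) = ⟨k, by omega⟩ from rfl] at h1
    rw [gen_add D c μ b ε k (by omega), gen_diag D c μ b ε (k + 1) (by omega),
      gen_sub D c μ b ε (k + 1) (by omega)] at h1
    linear_combination -h1 + hb

lemma lam_pos (D : ℕ) (c : ℝ) (hc : 0 < c) (ε : ℝ) (hε : 0 < ε) (i : ℕ) (hi : i < D) :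
    0 < lamF D c ε i := by
  have h1 : (i : ℝ) < D := by exact_mod_cast hi
  have hD : (0 : ℝ) < D := lt_of_le_of_lt (Nat.cast_nonneg i) h1
  unfold lamF
  exact mul_pos (add_pos_of_nonneg_of_pos (by positivity) (mul_pos (mul_pos hε hc) hD))
    (by linarith)

lemma lam0_pos (D : ℕ) (c : ℝ) (hc : 0 < c) (i : ℕ) (h0 : 0 < i) (hi : i < D) :
    0 < lamF D c 0 i := by
  have h1 : (i : ℝ) < D := by exact_mod_cast hi
  have h2 : (0 : ℝ) < i := by exact_mod_cast h0
  unfold lamF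
  exact mul_pos (by nlinarith [mul_pos hc h2]) (by linarith)

lemma gam_pos (D : ℕ) (c μ b : ℝ) (hc : 0 < c) (hμ : 0 < μ) (hb : 0 < b)
    (ε : ℝ) (hε : 0 < ε) (i : ℕ) (h0 : 0 < i) (hi : i ≤ D) :
    0 < gamF D c μ b ε i := by
  have h1 : (i : ℝ) ≤ D := by exact_mod_cast hi
  have h2 : (0 : ℝ) < i := by exact_mod_cast h0
  have hD : (0 : ℝ) < D := lt_of_lt_of_le h2 h1
  unfold gamF
  exact mul_pos (mul_pos hμ (add_pos_of_nonneg_of_pos (mul_nonneg hc.le (by linarith))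
    (mul_pos (mul_pos (mul_pos hb hε) hc) hD))) h2

lemma gam0_pos (D : ℕ) (c μ b : ℝ) (hc : 0 < c) (hμ : 0 < μ) (i : ℕ) (h0 : 0 < i) (hi : i < D) :
    0 < gamF D c μ b 0 i := by
  have h1 : (i : ℝ) < D := by exact_mod_cast hi
  have h2 : (0 : ℝ) < i := by exact_mod_cast h0
  unfold gamF
  exact mul_pos (mul_pos hμ (by nlinarith [mul_pos hc (show (0:ℝ) < (D:ℝ) - i by linarith)])) h2

lemma rho_pos (D : ℕ) (c μ b : ℝ) (hc : 0 < c) (hμ : 0 < μ) (hb : 0 < b)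
    (ε : ℝ) (hε : 0 < ε) (x : ℕ) (hx : x ≤ D) :
    0 < rhoF D c μ b ε x := by
  unfold rhoF
  apply Finset.prod_pos
  intro i hi
  rw [Finset.mem_range] at hi
  exact div_pos (lam_pos D c hc ε hε i (by omega)) (gam_pos D c μ b hc hμ hb ε hε (i+1) (by omega) (by omega))

noncomputable def sumRho (D : ℕ) (c μ b ε : ℝ) : ℝ := ∑ n ∈ Finset.range (D + 1), rhoF D c μ b ε n

lemma sumRho_pos (D : ℕ) (c μ b : ℝ) (hc : 0 < c) (hμ : 0 < μ) (hb : 0 < b)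
    (ε : ℝ) (hε : 0 < ε) : 0 < sumRho D c μ b ε := by
  apply Finset.sum_pos
  · intro i hi
    rw [Finset.mem_range] at hi
    exact rho_pos D c μ b hc hμ hb ε hε i (by omega)
  · exact ⟨0, by simp⟩

lemma pi_formula (D : ℕ) (c μ b : ℝ) (hD : 2 ≤ D) (hc : 0 < c) (hμ : 0 < μ) (hb : 0 < b)
    (ε : ℝ) (hε : 0 < ε) (v : Fin (D + 1) → ℝ) (hsum : ∑ x, v x = 1)
    (hv : ∀ y : Fin (D + 1), ∑ x : Fin (D + 1), v x * chromGen D c μ b ε x y = 0) :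
    ∀ x : Fin (D + 1), v x = rhoF D c μ b ε (x : ℕ) / sumRho D c μ b ε := by
  have hbal := balance D c μ b ε hD v hv
  -- v ⟨n⟩ = v 0 * rhoF n
  have key : ∀ n (hn : n ≤ D), v ⟨n, by omega⟩ = v 0 * rhoF D c μ b ε n := by
    intro n
    induction n with
    | zero =>
      intro _
      simp [rhoF, show (⟨0, by omega⟩ : Fin (D+1)) = 0 from rfl]
    | succ n ih =>
      intro hn
      have hb1 := hbal n (by omega)
      have hg : gamF D c μ b ε (n + 1) ≠ 0 :=
        ne_of_gt (gam_pos D c μ b hc hμ hb ε hε (n+1) (by omega) (by omega))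
      have : v ⟨n + 1, by omega⟩ = v ⟨n, by omega⟩ * (lamF D c ε n / gamF D c μ b ε (n + 1)) := by
        field_simp
        linarith [hb1]
      rw [this, ih (by omega),
        show rhoF D c μ b ε (n+1) = rhoF D c μ b ε n * (lamF D c ε n / gamF D c μ b ε (n+1)) from
          by simp [rhoF, Finset.prod_range_succ]; ring]
      ring
  have hS : ∑ x : Fin (D + 1), v x = v 0 * sumRho D c μ b ε := by
    rw [show ∑ x : Fin (D+1), v x = ∑ x : Fin (D+1), (fun n => v 0 * rhoF D c μ b ε n) (x : ℕ) from
      Finset.sum_congr rfl (fun x _ => by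
        have := key (x : ℕ) (by omega)
        simpa [Fin.eta] using this)]
    rw [Fin.sum_univ_eq_sum_range (fun n => v 0 * rhoF D c μ b ε n) (D + 1)]
    rw [sumRho, Finset.mul_sum]
  have hSpos := sumRho_pos D c μ b hc hμ hb ε hε
  have hv0 : v 0 = 1 / sumRho D c μ b ε := by
    rw [hsum] at hS
    field_simp
    linarith [hS]
  intro x
  have := key (x : ℕ) (by omega)
  rw [Fin.eta] at this
  rw [this, hv0]
  ring

lemma cont_lam (D : ℕ) (c : ℝ) (i : ℕ) : Continuous (fun ε : ℝ => lamF D c ε i) := by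
  unfold lamF; fun_prop

lemma cont_gam (D : ℕ) (c μ b : ℝ) (i : ℕ) : Continuous (fun ε : ℝ => gamF D c μ b ε i) := by
  unfold gamF; fun_prop

lemma tendsto_eps : Tendsto (fun ε : ℝ => ε) (𝓝[>] (0:ℝ)) (𝓝 0) :=
  tendsto_id.mono_left nhdsWithin_le_nhds

lemma tendsto_lam (D : ℕ) (c : ℝ) (i : ℕ) :
    Tendsto (fun ε : ℝ => lamF D c ε i) (𝓝[>] (0:ℝ)) (𝓝 (lamF D c 0 i)) :=
  ((cont_lam D c i).tendsto 0).mono_left nhdsWithin_le_nhds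

lemma tendsto_gam (D : ℕ) (c μ b : ℝ) (i : ℕ) :
    Tendsto (fun ε : ℝ => gamF D c μ b ε i) (𝓝[>] (0:ℝ)) (𝓝 (gamF D c μ b 0 i)) :=
  ((cont_gam D c μ b i).tendsto 0).mono_left nhdsWithin_le_nhds

lemma tendsto_rho_mid (D : ℕ) (c μ b : ℝ) (hD : 2 ≤ D) (hc : 0 < c) (hμ : 0 < μ) (hb : 0 < b)
    (x : ℕ) (hx1 : 0 < x) (hx2 : x < D) :
    Tendsto (fun ε : ℝ => rhoF D c μ b ε x) (𝓝[>] (0:ℝ)) (𝓝 0) := by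
  obtain ⟨y, rfl⟩ : ∃ y, x = y + 1 := ⟨x - 1, by omega⟩
  have hid : ∀ ε : ℝ, rhoF D c μ b ε (y + 1)
      = ε * ((c * D * D / gamF D c μ b ε 1)
          * ∏ i ∈ Finset.range y, lamF D c ε (i + 1) / gamF D c μ b ε (i + 2)) := by
    intro ε
    rw [rhoF, Finset.prod_range_succ']
    have h0 : lamF D c ε 0 = ε * (c * D * D) := by simp [lamF]; ring
    rw [h0]; ring
  have hne1 : gamF D c μ b 0 1 ≠ 0 := ne_of_gt (gam0_pos D c μ b hc hμ 1 (by omega) (by omega))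
  have hprod : Tendsto (fun ε : ℝ => ∏ i ∈ Finset.range y,
      lamF D c ε (i + 1) / gamF D c μ b ε (i + 2)) (𝓝[>] (0:ℝ))
      (𝓝 (∏ i ∈ Finset.range y, lamF D c 0 (i + 1) / gamF D c μ b 0 (i + 2))) := by
    apply tendsto_finset_prod
    intro i hi
    rw [Finset.mem_range] at hi
    exact (tendsto_lam D c (i+1)).div (tendsto_gam D c μ b (i+2))
      (ne_of_gt (gam0_pos D c μ b hc hμ (i+2) (by omega) (by omega)))
  have hmain := tendsto_eps.mul (((tendsto_const_nhds (x := c * (D:ℝ) * D)).div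
    (tendsto_gam D c μ b 1) hne1).mul hprod)
  rw [zero_mul] at hmain
  exact hmain.congr (fun ε => (hid ε).symm)

lemma tendsto_rhoD (D : ℕ) (c μ b : ℝ) (hD : 2 ≤ D) (hc : 0 < c) (hμ : 0 < μ) (hb : 0 < b) :
    Tendsto (fun ε : ℝ => rhoF D c μ b ε D) (𝓝[>] (0:ℝ)) (𝓝 (1 / (b * μ ^ D))) := by
  obtain ⟨m, rfl⟩ : ∃ m, D = m + 1 := ⟨D - 1, by omega⟩
  set P : ℝ → ℝ := fun ε => ∏ i ∈ Finset.range m, lamF (m+1) c ε (i + 1) with hP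
  set Q : ℝ → ℝ := fun ε => ∏ i ∈ Finset.range m, gamF (m+1) c μ b ε (i + 1) with hQ
  have hD' : ((m:ℝ) + 1) ≠ 0 := by positivity
  have hid : ∀ ε : ℝ, ε ≠ 0 → rhoF (m+1) c μ b ε (m+1)
      = (c * (m+1) * (m+1) * P ε) / (μ * b * c * (m+1) * (m+1) * Q ε) := by
    intro ε hε
    rw [rhoF, show (∏ i ∈ Finset.range (m+1), lamF (m+1) c ε i / gamF (m+1) c μ b ε (i + 1))
        = (∏ i ∈ Finset.range (m+1), lamF (m+1) c ε i)
          / (∏ i ∈ Finset.range (m+1), gamF (m+1) c μ b ε (i + 1)) from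
        Finset.prod_div_distrib _ _, Finset.prod_range_succ', Finset.prod_range_succ]
    have h0 : lamF (m+1) c ε 0 = ε * (c * (m+1) * (m+1)) := by
      simp [lamF]; push_cast; ring
    have hDD : gamF (m+1) c μ b ε (m+1) = ε * (μ * b * c * (m+1) * (m+1)) := by
      simp [gamF]; push_cast; ring
    rw [h0, hDD]
    rw [show P ε * (ε * (c * (m+1) * (m+1))) = ε * (c * (m+1) * (m+1) * P ε) by push_cast; ring,
      show Q ε * (ε * (μ * b * c * (m+1) * (m+1))) = ε * (μ * b * c * (m+1) * (m+1) * Q ε) by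
        push_cast; ring,
      mul_div_mul_left _ _ hε]
  have hP0 : 0 < P 0 := by
    apply Finset.prod_pos
    intro i hi
    rw [Finset.mem_range] at hi
    exact lam0_pos (m+1) c hc (i+1) (by omega) (by omega)
  have hQ0 : Q 0 = μ ^ m * P 0 := by
    show (∏ i ∈ Finset.range m, gamF (m+1) c μ b 0 (i + 1))
        = μ ^ m * ∏ i ∈ Finset.range m, lamF (m+1) c 0 (i + 1)
    rw [show (∏ i ∈ Finset.range m, gamF (m+1) c μ b 0 (i + 1))
        = ∏ i ∈ Finset.range m, μ * lamF (m+1) c 0 (i + 1) from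
      Finset.prod_congr rfl (fun i _ => by unfold gamF lamF; ring)]
    rw [Finset.prod_mul_distrib, Finset.prod_const, Finset.card_range]
  have hden : μ * b * c * ((m:ℝ)+1) * ((m:ℝ)+1) * Q 0 ≠ 0 := by
    rw [hQ0]; positivity
  have hPt : Tendsto P (𝓝[>] (0:ℝ)) (𝓝 (P 0)) := by
    apply tendsto_finset_prod
    intro i _
    exact tendsto_lam (m+1) c (i+1)
  have hQt : Tendsto Q (𝓝[>] (0:ℝ)) (𝓝 (Q 0)) := by
    apply tendsto_finset_prod
    intro i _
    exact tendsto_gam (m+1) c μ b (i+1)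
  have hmain : Tendsto (fun ε : ℝ =>
      (c * ((m:ℝ)+1) * ((m:ℝ)+1) * P ε) / (μ * b * c * ((m:ℝ)+1) * ((m:ℝ)+1) * Q ε))
      (𝓝[>] (0:ℝ))
      (𝓝 ((c * ((m:ℝ)+1) * ((m:ℝ)+1) * P 0) / (μ * b * c * ((m:ℝ)+1) * ((m:ℝ)+1) * Q 0))) :=
    ((tendsto_const_nhds.mul hPt)).div ((tendsto_const_nhds.mul hQt)) hden
  have hval : (c * ((m:ℝ)+1) * ((m:ℝ)+1) * P 0) / (μ * b * c * ((m:ℝ)+1) * ((m:ℝ)+1) * Q 0)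
      = 1 / (b * μ ^ (m+1)) := by
    rw [hQ0]
    field_simp
    ring
  rw [hval] at hmain
  apply hmain.congr'
  filter_upwards [self_mem_nhdsWithin] with ε hε
  have := hid ε (ne_of_gt hε)
  push_cast at this ⊢
  rw [this]

lemma tendsto_sumRho (D : ℕ) (c μ b : ℝ) (hD : 2 ≤ D) (hc : 0 < c) (hμ : 0 < μ) (hb : 0 < b) :
    Tendsto (fun ε : ℝ => sumRho D c μ b ε) (𝓝[>] (0:ℝ)) (𝓝 (1 + 1 / (b * μ ^ D))) := by
  have hL : ∀ n ∈ Finset.range (D + 1), Tendsto (fun ε : ℝ => rhoF D c μ b ε n) (𝓝[>] (0:ℝ))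
      (𝓝 ((if n = 0 then 1 else 0) + (if n = D then 1 / (b * μ ^ D) else 0))) := by
    intro n hn
    rw [Finset.mem_range] at hn
    rcases eq_or_ne n 0 with rfl | h0
    · simp only [if_pos rfl, if_neg (by omega : ¬(0 = D))]
      rw [add_zero]
      have : ∀ ε : ℝ, rhoF D c μ b ε 0 = 1 := fun ε => by simp [rhoF]
      simp only [this]
      exact tendsto_const_nhds
    rcases eq_or_ne n D with hnD | hnD
    · simp only [hnD, if_neg (show ¬D = 0 by omega), if_pos rfl, zero_add]
      exact tendsto_rhoD D c μ b hD hc hμ hb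
    · simp only [if_neg h0, if_neg hnD, add_zero]
      exact tendsto_rho_mid D c μ b hD hc hμ hb n (by omega) (by omega)
  have h := tendsto_finset_sum (Finset.range (D + 1)) hL
  have hsum : (∑ n ∈ Finset.range (D + 1),
      ((if n = 0 then (1:ℝ) else 0) + (if n = D then 1 / (b * μ ^ D) else 0)))
      = 1 + 1 / (b * μ ^ D) := by
    rw [Finset.sum_add_distrib, Finset.sum_ite_eq' (Finset.range (D+1)) 0 (fun _ => (1:ℝ)),
      Finset.sum_ite_eq' (Finset.range (D+1)) D (fun _ => 1 / (b * μ ^ D))]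
    simp [Finset.mem_range]
  rw [hsum] at h
  exact h

end ChromAux

/-- For the 1D chromatin model on `{0,…,D}` (`D ≥ 2`), the stationary distribution `π(ε)`
of the (irreducible, for `ε > 0`) birth–death chain satisfies
`π₀(ε) → bμ^D/(1 + bμ^D)`, `π_D(ε) → 1/(1 + bμ^D)` and `π_x(ε) → 0` for `0 < x < D`,
as `ε → 0⁺`. -/
theorem stmt17 (D : ℕ) (hD : 2 ≤ D) (c μ b : ℝ) (hc : 0 < c) (hμ : 0 < μ) (hb : 0 < b)
    (π : ℝ → Fin (D + 1) → ℝ)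
    (hπ : ∀ ε : ℝ, 0 < ε →
      (∀ x, 0 ≤ π ε x) ∧ (∑ x, π ε x = 1) ∧
      ∀ y : Fin (D + 1), ∑ x : Fin (D + 1), π ε x * chromGen D c μ b ε x y = 0) :
    Tendsto (fun ε => π ε 0) (𝓝[>] (0 : ℝ)) (𝓝 (b * μ ^ D / (1 + b * μ ^ D))) ∧
    Tendsto (fun ε => π ε (Fin.last D)) (𝓝[>] (0 : ℝ)) (𝓝 (1 / (1 + b * μ ^ D))) ∧
    ∀ x : Fin (D + 1), 0 < (x : ℕ) → (x : ℕ) < D →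
      Tendsto (fun ε => π ε x) (𝓝[>] (0 : ℝ)) (𝓝 0) := by
  have hbμ : (0:ℝ) < b * μ ^ D := by positivity
  have hSlim := tendsto_sumRho D c μ b hD hc hμ hb
  have hSne : 1 + 1 / (b * μ ^ D) ≠ 0 := by positivity
  have hfor : ∀ (x : Fin (D + 1)), ∀ᶠ ε in 𝓝[>] (0:ℝ),
      π ε x = rhoF D c μ b ε (x : ℕ) / sumRho D c μ b ε := by
    intro x
    filter_upwards [self_mem_nhdsWithin] with ε hε
    exact pi_formula D c μ b hD hc hμ hb ε hε (π ε) (hπ ε hε).2.1 (hπ ε hε).2.2 x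
  refine ⟨?_, ?_, ?_⟩
  · -- π 0
    have h0 : Tendsto (fun ε : ℝ => rhoF D c μ b ε ((0 : Fin (D+1)) : ℕ) / sumRho D c μ b ε)
        (𝓝[>] (0:ℝ)) (𝓝 (1 / (1 + 1 / (b * μ ^ D)))) := by
      have : ∀ ε : ℝ, rhoF D c μ b ε ((0 : Fin (D+1)) : ℕ) = 1 := fun ε => by simp [rhoF]
      simp only [this]
      exact (tendsto_const_nhds (x := (1:ℝ))).div hSlim hSne
    have hval : 1 / (1 + 1 / (b * μ ^ D)) = b * μ ^ D / (1 + b * μ ^ D) := by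
      rw [div_eq_div_iff (by positivity) (by positivity)]
      field_simp
      ring
    rw [hval] at h0
    exact h0.congr' (by filter_upwards [hfor 0] with ε hε using hε.symm)
  · -- π D
    have hD0 : ((Fin.last D : Fin (D+1)) : ℕ) = D := rfl
    have h0 : Tendsto (fun ε : ℝ => rhoF D c μ b ε D / sumRho D c μ b ε)
        (𝓝[>] (0:ℝ)) (𝓝 ((1 / (b * μ ^ D)) / (1 + 1 / (b * μ ^ D)))) :=
      (tendsto_rhoD D c μ b hD hc hμ hb).div hSlim hSne
    have hval : (1 / (b * μ ^ D)) / (1 + 1 / (b * μ ^ D)) = 1 / (1 + b * μ ^ D) := by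
      rw [div_eq_div_iff (by positivity) (by positivity)]
      field_simp
      ring
    rw [hval] at h0
    refine h0.congr' (by filter_upwards [hfor (Fin.last D)] with ε hε; exact hε.symm)
  · intro x hx1 hx2
    have h0 : Tendsto (fun ε : ℝ => rhoF D c μ b ε (x : ℕ) / sumRho D c μ b ε)
        (𝓝[>] (0:ℝ)) (𝓝 (0 / (1 + 1 / (b * μ ^ D)))) :=
      (tendsto_rho_mid D c μ b hD hc hμ hb (x : ℕ) hx1 hx2).div hSlim hSne
    rw [zero_div] at h0
    exact h0.congr' (by filter_upwards [hfor x] with ε hε using hε.symm)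
end

section
/- Let Q be an infinitesimal generator on a finite set 𝒴 with |Q_{y,y}| ≤ λ for all y, let P̆ = I + Q/λ be the associated discrete-time transition matrix, Π̆ its ergodic (Cesàro) projection, and H̆ = (I − P̆ + Π̆)⁻¹ − Π̆ its deviation matrix. Then Π̆ Q = 0, the matrix −Q + Π̆ is invertible, and (1/λ) H̆ = (−Q + Π̆)⁻¹ − Π̆. -/
open Matrix Filter Topology

/-- Let `Q` be a Q-matrix on a finite set with `|Q y y| ≤ λ`, let `P = I + Q/λ` be the
associated discrete-time transition matrix, let `Proj` be its ergodic (Cesàro) projection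
`lim_N (N+1)⁻¹ Σ_{n≤N} P^n`, and let `H = (I − P + Proj)⁻¹ − Proj` be the deviation matrix.
Then `Proj Q = 0`, the matrix `−Q + Proj` is invertible, and
`(1/λ) H = (−Q + Proj)⁻¹ − Proj`. -/
theorem stmt18 {V : Type*} [Fintype V] [DecidableEq V] [Nonempty V]
    (Q : Matrix V V ℝ) (lam : ℝ) (hlam : 0 < lam)
    (hoff : ∀ x y, x ≠ y → 0 ≤ Q x y) (hrow : ∀ x, ∑ y, Q x y = 0)
    (hdiag : ∀ y, |Q y y| ≤ lam)
    (P : Matrix V V ℝ) (hP : P = 1 + lam⁻¹ • Q)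
    (Proj : Matrix V V ℝ)
    (hProj : ∀ x y, Tendsto
      (fun N : ℕ => (1 / ((N : ℝ) + 1)) * ∑ n ∈ Finset.range (N + 1), (P ^ n) x y)
      atTop (𝓝 (Proj x y))) :
    Proj * Q = 0 ∧ IsUnit (-Q + Proj) ∧
    lam⁻¹ • ((1 - P + Proj)⁻¹ - Proj) = (-Q + Proj)⁻¹ - Proj := by
  -- P is row-stochastic
  have hPapply : ∀ x y, P x y = (if x = y then (1:ℝ) else 0) + lam⁻¹ * Q x y := by
    intro x y; rw [hP]; simp [Matrix.one_apply]
  have hPnn : ∀ x y, 0 ≤ P x y := by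
    intro x y
    rw [hPapply]
    by_cases h : x = y
    · subst h
      rw [if_pos rfl]
      have h1 : -lam ≤ Q x x := (abs_le.mp (hdiag x)).1
      have h3 : lam⁻¹ * Q x x ≥ lam⁻¹ * (-lam) := by
        apply mul_le_mul_of_nonneg_left h1 (le_of_lt (inv_pos.mpr hlam))
      have h2 : lam⁻¹ * (-lam) = -1 := by field_simp
      linarith
    · simp only [if_neg h, zero_add]
      exact mul_nonneg (le_of_lt (inv_pos.mpr hlam)) (hoff x y h)
  have hProw : ∀ x, ∑ y, P x y = 1 := by
    intro x
    simp only [hPapply, Finset.sum_add_distrib, ← Finset.mul_sum, hrow, mul_zero, add_zero,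
      Finset.sum_ite_eq, Finset.mem_univ, if_true]
  -- powers of P are row-stochastic
  have hpow : ∀ n : ℕ, (∀ x y, 0 ≤ (P ^ n) x y) ∧ (∀ x, ∑ y, (P ^ n) x y = 1) := by
    intro n
    induction n with
    | zero =>
      constructor
      · intro x y; simp only [pow_zero, Matrix.one_apply]; positivity
      · intro x; simp [Matrix.one_apply]
    | succ n ih =>
      constructor
      · intro x y
        rw [pow_succ, Matrix.mul_apply]
        exact Finset.sum_nonneg fun z _ => mul_nonneg (ih.1 x z) (hPnn z y)
      · intro x
        simp only [pow_succ, Matrix.mul_apply]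
        rw [Finset.sum_comm]
        simp only [← Finset.mul_sum, hProw, mul_one]
        exact ih.2 x
  have hpow_le : ∀ (n : ℕ) x y, (P ^ n) x y ≤ 1 := by
    intro n x y
    calc (P ^ n) x y ≤ ∑ z, (P ^ n) x z :=
          Finset.single_le_sum (fun z _ => (hpow n).1 x z) (Finset.mem_univ y)
      _ = 1 := (hpow n).2 x
  -- the shifted Cesàro sums also tend to Proj entries
  have hg : ∀ x y, Tendsto
      (fun N : ℕ => (1 / ((N : ℝ) + 1)) * ∑ n ∈ Finset.range (N + 1), (P ^ (n + 1)) x y)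
      atTop (𝓝 (Proj x y)) := by
    intro x y
    have herr : Tendsto
        (fun N : ℕ => (1 / ((N : ℝ) + 1)) * ((P ^ (N + 1)) x y - (P ^ 0) x y))
        atTop (𝓝 0) := by
      apply squeeze_zero_norm (a := fun N : ℕ => 2 * (1 / ((N : ℝ) + 1)))
      · intro N
        have h1 : |(P ^ (N + 1)) x y - (P ^ 0) x y| ≤ 2 := by
          have := (hpow (N + 1)).1 x y
          have := hpow_le (N + 1) x y
          have := (hpow 0).1 x y
          have := hpow_le 0 x y
          rw [abs_le]; constructor <;> linarith
        have h2 : (0:ℝ) ≤ 1 / ((N : ℝ) + 1) := by positivity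
        rw [Real.norm_eq_abs, abs_mul, abs_of_nonneg h2]
        calc (1 / ((N : ℝ) + 1)) * |(P ^ (N + 1)) x y - (P ^ 0) x y|
            ≤ (1 / ((N : ℝ) + 1)) * 2 := mul_le_mul_of_nonneg_left h1 h2
          _ = 2 * (1 / ((N : ℝ) + 1)) := by ring
      · have := tendsto_one_div_add_atTop_nhds_zero_nat.const_mul (2:ℝ)
        simpa using this
    have heq : (fun N : ℕ => (1 / ((N : ℝ) + 1)) * ∑ n ∈ Finset.range (N + 1), (P ^ (n + 1)) x y)
        = fun N : ℕ => (1 / ((N : ℝ) + 1)) * ∑ n ∈ Finset.range (N + 1), (P ^ n) x y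
          + (1 / ((N : ℝ) + 1)) * ((P ^ (N + 1)) x y - (P ^ 0) x y) := by
      funext N
      rw [← mul_add]
      congr 1
      have h1 : ∑ n ∈ Finset.range (N + 2), (P ^ n) x y
          = (∑ n ∈ Finset.range (N + 1), (P ^ (n + 1)) x y) + (P ^ 0) x y :=
        Finset.sum_range_succ' _ (N + 1)
      have h2 : ∑ n ∈ Finset.range (N + 2), (P ^ n) x y
          = (∑ n ∈ Finset.range (N + 1), (P ^ n) x y) + (P ^ (N + 1)) x y :=
        Finset.sum_range_succ _ (N + 1)
      linarith
    rw [heq]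
    simpa using (hProj x y).add herr
  -- Proj * P = Proj
  have hProjP : Proj * P = Proj := by
    ext x y
    rw [Matrix.mul_apply]
    have h1 : Tendsto
        (fun N : ℕ => ∑ z, ((1 / ((N : ℝ) + 1)) * ∑ n ∈ Finset.range (N + 1), (P ^ n) x z) * P z y)
        atTop (𝓝 (∑ z, Proj x z * P z y)) :=
      tendsto_finset_sum _ fun z _ => (hProj x z).mul_const _
    have heq : (fun N : ℕ =>
          ∑ z, ((1 / ((N : ℝ) + 1)) * ∑ n ∈ Finset.range (N + 1), (P ^ n) x z) * P z y)
        = fun N : ℕ => (1 / ((N : ℝ) + 1)) * ∑ n ∈ Finset.range (N + 1), (P ^ (n + 1)) x y := by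
      funext N
      simp only [mul_assoc, Finset.sum_mul, ← Finset.mul_sum]
      congr 1
      rw [Finset.sum_comm]
      refine Finset.sum_congr rfl fun n _ => ?_
      rw [pow_succ, Matrix.mul_apply]
    rw [heq] at h1
    exact tendsto_nhds_unique h1 (hg x y)
  -- P * Proj = Proj
  have hPProj : P * Proj = Proj := by
    ext x y
    rw [Matrix.mul_apply]
    have h1 : Tendsto
        (fun N : ℕ => ∑ z, P x z * ((1 / ((N : ℝ) + 1)) * ∑ n ∈ Finset.range (N + 1), (P ^ n) z y))
        atTop (𝓝 (∑ z, P x z * Proj z y)) :=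
      tendsto_finset_sum _ fun z _ => (hProj z y).const_mul _
    have heq : (fun N : ℕ =>
          ∑ z, P x z * ((1 / ((N : ℝ) + 1)) * ∑ n ∈ Finset.range (N + 1), (P ^ n) z y))
        = fun N : ℕ => (1 / ((N : ℝ) + 1)) * ∑ n ∈ Finset.range (N + 1), (P ^ (n + 1)) x y := by
      funext N
      have e1 : ∀ z, P x z * ((1 / ((N : ℝ) + 1)) * ∑ n ∈ Finset.range (N + 1), (P ^ n) z y)
          = (1 / ((N : ℝ) + 1)) * ∑ n ∈ Finset.range (N + 1), P x z * (P ^ n) z y := by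
        intro z; rw [mul_left_comm, Finset.mul_sum]
      rw [Finset.sum_congr rfl fun z _ => e1 z, ← Finset.mul_sum, Finset.sum_comm]
      congr 1
      refine Finset.sum_congr rfl fun n _ => ?_
      rw [pow_succ', Matrix.mul_apply]
    rw [heq] at h1
    exact tendsto_nhds_unique h1 (hg x y)
  -- Proj * P^n = Proj
  have hProjPn : ∀ n : ℕ, Proj * P ^ n = Proj := by
    intro n
    induction n with
    | zero => simp
    | succ n ih => rw [pow_succ, ← Matrix.mul_assoc, ih, hProjP]
  -- Proj is idempotent
  have hProjProj : Proj * Proj = Proj := by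
    ext x y
    rw [Matrix.mul_apply]
    have h1 : Tendsto
        (fun N : ℕ => ∑ z, Proj x z * ((1 / ((N : ℝ) + 1)) * ∑ n ∈ Finset.range (N + 1), (P ^ n) z y))
        atTop (𝓝 (∑ z, Proj x z * Proj z y)) :=
      tendsto_finset_sum _ fun z _ => (hProj z y).const_mul _
    have heq : (fun N : ℕ =>
          ∑ z, Proj x z * ((1 / ((N : ℝ) + 1)) * ∑ n ∈ Finset.range (N + 1), (P ^ n) z y))
        = fun _ : ℕ => Proj x y := by
      funext N
      have e1 : ∀ z, Proj x z * ((1 / ((N : ℝ) + 1)) * ∑ n ∈ Finset.range (N + 1), (P ^ n) z y)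
          = (1 / ((N : ℝ) + 1)) * ∑ n ∈ Finset.range (N + 1), Proj x z * (P ^ n) z y := by
        intro z; rw [mul_left_comm, Finset.mul_sum]
      have h2 : ∀ n ∈ Finset.range (N + 1), ∑ z, Proj x z * (P ^ n) z y = Proj x y := by
        intro n _
        rw [← Matrix.mul_apply, hProjPn n]
      rw [Finset.sum_congr rfl fun z _ => e1 z, ← Finset.mul_sum, Finset.sum_comm,
        Finset.sum_congr rfl h2, Finset.sum_const, Finset.card_range, nsmul_eq_mul]
      have hne : ((N : ℝ) + 1) ≠ 0 := by positivity
      push_cast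
      field_simp
    rw [heq] at h1
    exact tendsto_nhds_unique h1 tendsto_const_nhds
  -- fixed points of P are fixed points of Proj
  have hfix : ∀ v : V → ℝ, P *ᵥ v = v → Proj *ᵥ v = v := by
    intro v hv
    have hvn : ∀ n : ℕ, (P ^ n) *ᵥ v = v := by
      intro n
      induction n with
      | zero => simp
      | succ n ih => rw [pow_succ', ← Matrix.mulVec_mulVec, ih, hv]
    funext x
    have h1 : Tendsto
        (fun N : ℕ => ∑ z, ((1 / ((N : ℝ) + 1)) * ∑ n ∈ Finset.range (N + 1), (P ^ n) x z) * v z)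
        atTop (𝓝 (∑ z, Proj x z * v z)) :=
      tendsto_finset_sum _ fun z _ => (hProj x z).mul_const _
    have heq : (fun N : ℕ =>
          ∑ z, ((1 / ((N : ℝ) + 1)) * ∑ n ∈ Finset.range (N + 1), (P ^ n) x z) * v z)
        = fun _ : ℕ => v x := by
      funext N
      have e1 : ∀ z, ((1 / ((N : ℝ) + 1)) * ∑ n ∈ Finset.range (N + 1), (P ^ n) x z) * v z
          = (1 / ((N : ℝ) + 1)) * ∑ n ∈ Finset.range (N + 1), (P ^ n) x z * v z := by
        intro z; rw [mul_assoc, Finset.sum_mul]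
      have h2 : ∀ n ∈ Finset.range (N + 1), ∑ z, (P ^ n) x z * v z = v x := by
        intro n _
        have h3 := congrFun (hvn n) x
        simpa [Matrix.mulVec, dotProduct] using h3
      rw [Finset.sum_congr rfl fun z _ => e1 z, ← Finset.mul_sum, Finset.sum_comm,
        Finset.sum_congr rfl h2, Finset.sum_const, Finset.card_range, nsmul_eq_mul]
      have hne : ((N : ℝ) + 1) ≠ 0 := by positivity
      push_cast
      field_simp
    rw [heq] at h1
    have h4 := tendsto_nhds_unique h1 tendsto_const_nhds
    simpa [Matrix.mulVec, dotProduct] using h4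
  -- algebra
  have hQ : Q = lam • (P - 1) := by
    rw [hP, add_sub_cancel_left, smul_smul, mul_inv_cancel₀ hlam.ne', one_smul]
  have hProjQ : Proj * Q = 0 := by
    rw [hQ, Matrix.mul_smul, Matrix.mul_sub, Matrix.mul_one, hProjP, sub_self, smul_zero]
  have hunit : ∀ M : Matrix V V ℝ, Proj * M = Proj →
      (∀ v : V → ℝ, M *ᵥ v = 0 → Proj *ᵥ v = 0 → P *ᵥ v = v) → IsUnit M := by
    intro M hPM hker
    rw [Matrix.isUnit_iff_isUnit_det, isUnit_iff_ne_zero]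
    intro hdet
    obtain ⟨v, hv0, hv⟩ := Matrix.exists_mulVec_eq_zero_iff.mpr hdet
    have h1 : Proj *ᵥ v = 0 := by
      have h0 := congrArg (fun w => Proj *ᵥ w) hv
      simpa [Matrix.mulVec_mulVec, hPM] using h0
    have h3 : Proj *ᵥ v = v := hfix v (hker v hv h1)
    exact hv0 (by rw [← h3, h1])
  have hProjB : Proj * (1 - P + Proj) = Proj := by
    rw [Matrix.mul_add, Matrix.mul_sub, Matrix.mul_one, hProjP, hProjProj, sub_self, zero_add]
  have hBunit : IsUnit (1 - P + Proj) := by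
    refine hunit _ hProjB ?_
    intro v hv hpv
    rw [Matrix.add_mulVec, Matrix.sub_mulVec, Matrix.one_mulVec, hpv, add_zero,
      sub_eq_zero] at hv
    exact hv.symm
  have hMunit : IsUnit (-Q + Proj) := by
    refine hunit _ ?_ ?_
    · rw [Matrix.mul_add, Matrix.mul_neg, hProjQ, neg_zero, zero_add, hProjProj]
    · intro v hv hpv
      rw [Matrix.add_mulVec, hpv, add_zero, Matrix.neg_mulVec, neg_eq_zero, hQ,
        Matrix.smul_mulVec, smul_eq_zero] at hv
      rcases hv with h | h
      · exact absurd h hlam.ne'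
      · rw [Matrix.sub_mulVec, Matrix.one_mulVec, sub_eq_zero] at h
        exact h
  refine ⟨hProjQ, hMunit, ?_⟩
  set B := 1 - P + Proj with hB
  have hBdet : IsUnit B.det := (Matrix.isUnit_iff_isUnit_det _).mp hBunit
  have hBBinv : B * B⁻¹ = 1 := Matrix.mul_nonsing_inv _ hBdet
  have hBProj : B * Proj = Proj := by
    rw [hB, Matrix.add_mul, Matrix.sub_mul, Matrix.one_mul, hPProj, hProjProj, sub_self, zero_add]
  have hProjBinv : Proj * B⁻¹ = Proj := by
    conv_lhs => rw [← hProjB, Matrix.mul_assoc, hBBinv, Matrix.mul_one]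
  have hMeq : -Q + Proj = lam • B + (1 - lam) • Proj := by
    rw [hQ, hB]; module
  have hMX : (-Q + Proj) * (lam⁻¹ • B⁻¹ + (1 - lam⁻¹) • Proj) = 1 := by
    rw [hMeq]
    simp only [add_mul, mul_add, smul_mul_assoc, mul_smul_comm, smul_smul,
      hBBinv, hBProj, hProjBinv, hProjProj, mul_inv_cancel₀ hlam.ne', one_smul]
    match_scalars <;> field_simp <;> ring
  have hMinv : (-Q + Proj)⁻¹ = lam⁻¹ • B⁻¹ + (1 - lam⁻¹) • Proj :=
    Matrix.inv_eq_right_inv hMX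
  rw [hMinv]
  module
end
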